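/- Let q ∈ {2,3} and C ⊆ F_{q^m}^n a k-dimensional F_{q^m}-subspace with dim(C ∩ C^⊥) = h ≥ 2. Then for each ℓ ∈ {0,1,...,h−2} there exists A ∈ GL_n(F_q) such that C' = {vA : v ∈ C} satisfies dim(C' ∩ C'^⊥) = ℓ. -/

import Mathlib

open Matrix

/-- The dual code of a subspace of `Fin n → F` with respect to the standard
bilinear form `⟨v, w⟩ = ∑ i, v i * w i`. -/
def dualCode {F : Type*} [CommRing F] {n : ℕ} (C : Submodule F (Fin n → F)) :
    Submodule F (Fin n → F) where
  carrier := {v | ∀ w ∈ C, v ⬝ᵥ w = 0}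
  add_mem' := by
    intro a b ha hb w hw
    simp [add_dotProduct, ha w hw, hb w hw]
  zero_mem' := by
    intro w hw
    simp
  smul_mem' := by
    intro c a ha w hw
    simp [smul_dotProduct, ha w hw]

/-- Right multiplication by a matrix with entries in the subfield `Fq`,
as a linear map on `Fin n → F`. -/
noncomputable def rightMulCode {Fq F : Type*} [Field Fq] [Field F] [Algebra Fq F]
    {n : ℕ} (A : Matrix (Fin n) (Fin n) Fq) :
    (Fin n → F) →ₗ[F] (Fin n → F) :=
  (A.map (algebraMap Fq F)).vecMulLinear

namespace HullReductionAux

open Module Submodule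

/-! ### Generic matrix helper lemmas -/

section CommRingHelpers

variable {R : Type*} [CommRing R] {n : ℕ}

lemma mem_dualCode {C : Submodule R (Fin n → R)} {v : Fin n → R} :
    v ∈ dualCode C ↔ ∀ w ∈ C, v ⬝ᵥ w = 0 := Iff.rfl

lemma vmv_transpose (a b : Fin n → R) : (vecMulVec a b)ᵀ = vecMulVec b a := by
  ext i j; simp [vecMulVec_apply, mul_comm]

lemma vmv_mul_vmv (a b c d : Fin n → R) :
    vecMulVec a b * vecMulVec c d = (b ⬝ᵥ c) • vecMulVec a d := by
  ext i j
  simp only [mul_apply, vecMulVec_apply, Matrix.smul_apply, dotProduct, Finset.sum_mul, smul_eq_mul]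
  apply Finset.sum_congr rfl
  intros; ring

lemma vecMul_vmv (v a b : Fin n → R) : v ᵥ* vecMulVec a b = (v ⬝ᵥ a) • b := by
  funext j
  simp only [vecMul, dotProduct, Pi.smul_apply, smul_eq_mul, Finset.sum_mul]
  apply Finset.sum_congr rfl
  intros; simp [vecMulVec_apply]; ring

lemma vmv_add_left (a b c : Fin n → R) :
    vecMulVec (a + b) c = vecMulVec a c + vecMulVec b c := by
  ext i j; simp [vecMulVec_apply]; ring

lemma vmv_add_right (a b c : Fin n → R) :
    vecMulVec a (b + c) = vecMulVec a b + vecMulVec a c := by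
  ext i j; simp [vecMulVec_apply]; ring

lemma map_vmv {S : Type*} [CommRing S] (f : R →+* S) (a b : Fin n → R) :
    (vecMulVec a b).map f = vecMulVec (f ∘ a) (f ∘ b) := by
  ext i j; simp [vecMulVec_apply]

lemma sds (i : Fin n) : (Pi.single i 1 : Fin n → R) ⬝ᵥ Pi.single i 1 = 1 := by
  rw [single_dotProduct, Pi.single_eq_same, mul_one]

lemma sdsn {i j : Fin n} (hij : i ≠ j) :
    (Pi.single i 1 : Fin n → R) ⬝ᵥ Pi.single j 1 = 0 := by
  rw [single_dotProduct, Pi.single_eq_of_ne hij, mul_zero]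

end CommRingHelpers

/-! ### The hull of a transformed code -/

section FieldF

variable {F : Type*} [Field F] {n : ℕ}

lemma dot_vecMul_vecMul (v w : Fin n → F) (P : Matrix (Fin n) (Fin n) F) :
    (v ᵥ* P) ⬝ᵥ (w ᵥ* P) = (v ᵥ* (P * Pᵀ)) ⬝ᵥ w := by
  rw [← mulVec_transpose P w, dotProduct_mulVec, vecMul_vecMul]

lemma hull_map_eq (C : Submodule F (Fin n → F)) (P : Matrix (Fin n) (Fin n) F) :
    C.map P.vecMulLinear ⊓ dualCode (C.map P.vecMulLinear) =
      (C ⊓ (dualCode C).comap (P * Pᵀ).vecMulLinear).map P.vecMulLinear := by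
  ext x
  simp only [Submodule.mem_inf, Submodule.mem_map, mem_dualCode, Submodule.mem_comap,
    vecMulLinear_apply]
  constructor
  · rintro ⟨⟨v, hv, rfl⟩, hd⟩
    refine ⟨v, ⟨hv, fun w hw => ?_⟩, rfl⟩
    rw [← dot_vecMul_vecMul]
    exact hd _ ⟨w, hw, rfl⟩
  · rintro ⟨v, ⟨hvC, hvd⟩, rfl⟩
    refine ⟨⟨v, hvC, rfl⟩, ?_⟩
    rintro y ⟨w, hw, rfl⟩
    rw [dot_vecMul_vecMul]
    exact hvd w hw

lemma hull_inf_comap (C : Submodule F (Fin n → F)) (E : Matrix (Fin n) (Fin n) F)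
    (hE : ∀ v ∈ C, (∀ x ∈ C ⊓ dualCode C, (v ᵥ* E) ⬝ᵥ x = 0) → v ᵥ* E = 0) :
    C ⊓ (dualCode C).comap (1 + E).vecMulLinear =
      (C ⊓ dualCode C) ⊓ LinearMap.ker E.vecMulLinear := by
  ext v
  simp only [Submodule.mem_inf, Submodule.mem_comap, vecMulLinear_apply, LinearMap.mem_ker,
    mem_dualCode, vecMul_add, vecMul_one]
  constructor
  · rintro ⟨hvC, hd⟩
    have hperp : ∀ x ∈ C ⊓ dualCode C, (v ᵥ* E) ⬝ᵥ x = 0 := by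
      rintro x ⟨hxC, hxD⟩
      have h1 : (v + v ᵥ* E) ⬝ᵥ x = 0 := hd x hxC
      have h2 : v ⬝ᵥ x = 0 := by rw [dotProduct_comm]; exact hxD v hvC
      rw [add_dotProduct, h2, zero_add] at h1
      exact h1
    have hE0 : v ᵥ* E = 0 := hE v hvC hperp
    rw [hE0, add_zero] at hd
    exact ⟨⟨hvC, hd⟩, hE0⟩
  · rintro ⟨⟨hvC, hvD⟩, hE0⟩
    refine ⟨hvC, ?_⟩
    rw [hE0, add_zero]
    exact hvD

lemma finrank_inf_ker {M₂ : Type*} [AddCommGroup M₂] [Module F M₂] [FiniteDimensional F M₂]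
    (p : Submodule F (Fin n → F)) (L : (Fin n → F) →ₗ[F] M₂)
    (hs : ∀ y : M₂, ∃ x ∈ p, L x = y) :
    finrank F ↥(p ⊓ LinearMap.ker L) + finrank F M₂ = finrank F ↥p := by
  set L' : ↥p →ₗ[F] M₂ := L.comp p.subtype with hL'
  have hrange : LinearMap.range L' = ⊤ := by
    rw [LinearMap.range_eq_top]
    intro y
    obtain ⟨x, hx, hLx⟩ := hs y
    exact ⟨⟨x, hx⟩, hLx⟩
  have hker : LinearMap.ker L' = (p ⊓ LinearMap.ker L).comap p.subtype := by
    rw [hL', LinearMap.ker_comp, Submodule.comap_inf, Submodule.comap_subtype_self, top_inf_eq]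
  have h1 := LinearMap.finrank_range_add_finrank_ker L'
  rw [hrange, finrank_top] at h1
  have h2 : finrank F ↥(LinearMap.ker L') = finrank F ↥(p ⊓ LinearMap.ker L) := by
    rw [hker]
    exact (Submodule.comapSubtypeEquivOfLe inf_le_left).finrank_eq
  omega

/-- The linear functional `v ↦ v ⬝ᵥ u`. -/
def dotL (u : Fin n → F) : (Fin n → F) →ₗ[F] F where
  toFun v := v ⬝ᵥ u
  map_add' x y := add_dotProduct x y u
  map_smul' c x := smul_dotProduct c x u

@[simp] lemma dotL_apply (u v : Fin n → F) : dotL u v = v ⬝ᵥ u := rfl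

end FieldF

section Main

variable {Fq F : Type*} [Field Fq] [Field F] [Algebra Fq F] {n : ℕ}

lemma hull_finrank_of (C : Submodule F (Fin n → F)) (A : Matrix (Fin n) (Fin n) Fq)
    (hA : IsUnit A) (E : Matrix (Fin n) (Fin n) F)
    (hS : (A * Aᵀ).map (algebraMap Fq F) = 1 + E)
    (hE : ∀ v ∈ C, (∀ x ∈ C ⊓ dualCode C, (v ᵥ* E) ⬝ᵥ x = 0) → v ᵥ* E = 0) :
    finrank F ↥(C.map (rightMulCode A) ⊓ dualCode (C.map (rightMulCode A))) =
      finrank F ↥((C ⊓ dualCode C) ⊓ LinearMap.ker E.vecMulLinear) := by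
  obtain ⟨u, rfl⟩ := hA
  set P : Matrix (Fin n) (Fin n) F := (u : Matrix (Fin n) (Fin n) Fq).map (algebraMap Fq F)
    with hP
  set Pinv : Matrix (Fin n) (Fin n) F :=
    ((u⁻¹ : (Matrix (Fin n) (Fin n) Fq)ˣ) : Matrix (Fin n) (Fin n) Fq).map (algebraMap Fq F)
    with hPinv
  have key1 : Pinv * P = 1 := by
    rw [hP, hPinv, ← Matrix.map_mul, Units.inv_mul]
    exact Matrix.map_one _ (map_zero _) (map_one _)
  have key2 : P * Pinv = 1 := by
    rw [hP, hPinv, ← Matrix.map_mul, Units.mul_inv]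
    exact Matrix.map_one _ (map_zero _) (map_one _)
  let e : (Fin n → F) ≃ₗ[F] (Fin n → F) :=
    LinearEquiv.ofLinear P.vecMulLinear Pinv.vecMulLinear
      (LinearMap.ext fun v => by
          simp [vecMulLinear_apply, vecMul_vecMul, key1, vecMul_one])
      (LinearMap.ext fun v => by
          simp [vecMulLinear_apply, vecMul_vecMul, key2, vecMul_one])
  have hcoe : (e : (Fin n → F) →ₗ[F] (Fin n → F)) = P.vecMulLinear := rfl
  have hPP : P * Pᵀ = 1 + E := by
    rw [hP, ← Matrix.transpose_map, ← Matrix.map_mul]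
    exact hS
  have hrm : (rightMulCode (↑u : Matrix (Fin n) (Fin n) Fq) : (Fin n → F) →ₗ[F] (Fin n → F))
      = P.vecMulLinear := rfl
  rw [hrm, hull_map_eq C P, hPP, hull_inf_comap C E hE, ← hcoe]
  exact LinearEquiv.finrank_map_eq e _

/-- Rank-one drop: if `A Aᵀ = 1 + u'u'ᵀ` and `u'` does not vanish on the hull,
then the hull dimension drops by exactly one. -/
lemma drop_one_of (C : Submodule F (Fin n → F)) {h : ℕ}
    (hh : finrank F ↥(C ⊓ dualCode C) = h)
    (A : Matrix (Fin n) (Fin n) Fq) (hA : IsUnit A) (u' : Fin n → F)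
    (hS : (A * Aᵀ).map (algebraMap Fq F) = 1 + vecMulVec u' u')
    (x₀ : Fin n → F) (hx₀ : x₀ ∈ C ⊓ dualCode C) (hx0 : u' ⬝ᵥ x₀ ≠ 0) :
    finrank F ↥(C.map (rightMulCode A) ⊓ dualCode (C.map (rightMulCode A))) = h - 1 := by
  have hE : ∀ v ∈ C, (∀ x ∈ C ⊓ dualCode C, (v ᵥ* vecMulVec u' u') ⬝ᵥ x = 0) →
      v ᵥ* vecMulVec u' u' = 0 := by
    intro v hv hperp
    have h1 := hperp x₀ hx₀
    rw [vecMul_vmv, smul_dotProduct] at h1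
    rcases mul_eq_zero.mp h1 with h | h
    · rw [vecMul_vmv, h, zero_smul]
    · exact absurd h hx0
  rw [hull_finrank_of C A hA _ hS hE]
  have hu' : u' ≠ 0 := fun e => hx0 (by simp [e])
  have hker : (C ⊓ dualCode C) ⊓ LinearMap.ker (vecMulVec u' u').vecMulLinear
      = (C ⊓ dualCode C) ⊓ LinearMap.ker (dotL u') := by
    ext v
    simp only [Submodule.mem_inf, LinearMap.mem_ker, vecMulLinear_apply, vecMul_vmv,
      dotL_apply, smul_eq_zero, or_iff_left hu']
  rw [hker]
  have hdot : x₀ ⬝ᵥ u' ≠ 0 := by rwa [dotProduct_comm]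
  have hsurj : ∀ y : F, ∃ x ∈ C ⊓ dualCode C, dotL u' x = y := by
    intro y
    refine ⟨(y / (x₀ ⬝ᵥ u')) • x₀, Submodule.smul_mem _ _ hx₀, ?_⟩
    simp only [dotL_apply, smul_dotProduct, smul_eq_mul]
    exact div_mul_cancel₀ y hdot
  have hfin := finrank_inf_ker (C ⊓ dualCode C) (dotL u') hsurj
  rw [hh, finrank_self] at hfin
  omega

/-- The additive character sum computations for the elementary matrix
`A = 1 + e_b e_aᵀ`: rank-two drop of the hull. -/
lemma drop_two (C : Submodule F (Fin n → F)) {h : ℕ}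
    (hh : finrank F ↥(C ⊓ dualCode C) = h)
    (a b : Fin n) (hab : a ≠ b) (w z : Fin n → F)
    (hw : w ∈ C ⊓ dualCode C) (hz : z ∈ C ⊓ dualCode C)
    (hdet : w a * z b - w b * z a ≠ 0) :
    ∃ A : Matrix (Fin n) (Fin n) Fq, IsUnit A ∧
      finrank F ↥(C.map (rightMulCode A) ⊓ dualCode (C.map (rightMulCode A))) = h - 2 := by
  classical
  set ea : Fin n → Fq := Pi.single a 1 with hea
  set eb : Fin n → Fq := Pi.single b 1 with heb
  set A : Matrix (Fin n) (Fin n) Fq := 1 + vecMulVec eb ea with hA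
  have hdot_ab : ea ⬝ᵥ eb = 0 := by
    rw [hea, heb, single_dotProduct, Pi.single_eq_of_ne hab, mul_zero]
  have hdot_aa : ea ⬝ᵥ ea = 1 := by
    rw [hea, single_dotProduct, Pi.single_eq_same, mul_one]
  have hmul : A * (1 - vecMulVec eb ea) = 1 := by
    rw [mul_sub, mul_one, hA, add_mul, one_mul, vmv_mul_vmv, hdot_ab, zero_smul, add_zero,
      add_sub_cancel_right]
  have hUnit : IsUnit A := ⟨⟨A, _, hmul, mul_eq_one_comm.mp hmul⟩, rfl⟩
  set ea' : Fin n → F := Pi.single a 1 with hea'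
  set eb' : Fin n → F := Pi.single b 1 with heb'
  have halg_a : (algebraMap Fq F) ∘ ea = ea' := by
    funext i
    rw [hea, hea']
    by_cases hi : i = a <;> simp [Pi.single_apply, hi]
  have halg_b : (algebraMap Fq F) ∘ eb = eb' := by
    funext i
    rw [heb, heb']
    by_cases hi : i = b <;> simp [Pi.single_apply, hi]
  set E : Matrix (Fin n) (Fin n) F :=
    vecMulVec ea' eb' + vecMulVec eb' ea' + vecMulVec eb' eb' with hE
  have hSq : A * Aᵀ = 1 + (vecMulVec ea eb + vecMulVec eb ea + vecMulVec eb eb) := by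
    rw [hA, transpose_add, transpose_one, vmv_transpose, add_mul, one_mul, mul_add, mul_one,
      vmv_mul_vmv, hdot_aa, one_smul]
    abel
  have hS : (A * Aᵀ).map (algebraMap Fq F) = 1 + E := by
    rw [hSq, Matrix.map_add _ (map_add _), Matrix.map_add _ (map_add _),
      Matrix.map_add _ (map_add _), Matrix.map_one _ (map_zero _) (map_one _),
      map_vmv, map_vmv, map_vmv, halg_a, halg_b, hE]
  have hEperp : ∀ v ∈ C, (∀ x ∈ C ⊓ dualCode C, (v ᵥ* E) ⬝ᵥ x = 0) → v ᵥ* E = 0 := by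
    intro v hv hperp
    have eq1 : v a * w b + v b * w a + v b * w b = 0 := by
      have h1 := hperp w hw
      simp only [hE, vecMul_add, vecMul_vmv, add_dotProduct, smul_dotProduct,
        dotProduct_single, single_dotProduct, smul_eq_mul, mul_one, one_mul,
        hea', heb'] at h1
      linear_combination h1
    have eq2 : v a * z b + v b * z a + v b * z b = 0 := by
      have h1 := hperp z hz
      simp only [hE, vecMul_add, vecMul_vmv, add_dotProduct, smul_dotProduct,
        dotProduct_single, single_dotProduct, smul_eq_mul, mul_one, one_mul,
        hea', heb'] at h1
      linear_combination h1
    have h3 : v b * (w a * z b - w b * z a) = 0 := by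
      linear_combination z b * eq1 - w b * eq2
    have hvb : v b = 0 := by
      rcases mul_eq_zero.mp h3 with h' | h'
      · exact h'
      · exact absurd h' hdet
    have h4 : v a * (w a * z b - w b * z a) = 0 := by
      linear_combination w a * eq2 - z a * eq1 - (w a * z b - z a * w b) * hvb
    have hva : v a = 0 := by
      rcases mul_eq_zero.mp h4 with h' | h'
      · exact h'
      · exact absurd h' hdet
    rw [hE, vecMul_add, vecMul_add, vecMul_vmv, vecMul_vmv, vecMul_vmv]
    rw [hea', heb', dotProduct_single, dotProduct_single, hva, hvb]
    simp
  refine ⟨A, hUnit, ?_⟩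
  rw [hull_finrank_of C A hUnit E hS hEperp]
  set L : (Fin n → F) →ₗ[F] F × F := (LinearMap.proj a).prod (LinearMap.proj b) with hL
  have hker : (C ⊓ dualCode C) ⊓ LinearMap.ker E.vecMulLinear
      = (C ⊓ dualCode C) ⊓ LinearMap.ker L := by
    ext v
    simp only [Submodule.mem_inf, LinearMap.mem_ker, vecMulLinear_apply]
    constructor
    · rintro ⟨hH, hv0⟩
      refine ⟨hH, ?_⟩
      have ha' := congrFun hv0 a
      have hb' := congrFun hv0 b
      simp only [hE, vecMul_add, vecMul_vmv, hea', heb', dotProduct_single, mul_one,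
        Pi.add_apply, Pi.smul_apply, Pi.single_eq_same, Pi.single_eq_of_ne hab,
        Pi.single_eq_of_ne (Ne.symm hab), smul_eq_mul, mul_zero, add_zero, zero_add,
        Pi.zero_apply, mul_one] at ha' hb'
      have hvb : v b = 0 := by linear_combination ha'
      have hva : v a = 0 := by linear_combination hb' - ha'
      rw [hL]
      ext
      · simpa [LinearMap.prod_apply] using hva
      · simpa [LinearMap.prod_apply] using hvb
    · rintro ⟨hH, hv0⟩
      refine ⟨hH, ?_⟩
      rw [hL] at hv0
      have hva : v a = 0 := congrArg Prod.fst hv0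
      have hvb : v b = 0 := congrArg Prod.snd hv0
      rw [hE, vecMul_add, vecMul_add, vecMul_vmv, vecMul_vmv, vecMul_vmv]
      rw [hea', heb', dotProduct_single, dotProduct_single, hva, hvb]
      simp
  rw [hker]
  have hsurj : ∀ y : F × F, ∃ x ∈ C ⊓ dualCode C, L x = y := by
    rintro ⟨p, q⟩
    refine ⟨((p * z b - q * z a) / (w a * z b - w b * z a)) • w
        + ((q * w a - p * w b) / (w a * z b - w b * z a)) • z,
      Submodule.add_mem _ (Submodule.smul_mem _ _ hw) (Submodule.smul_mem _ _ hz), ?_⟩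
    rw [hL]
    have hD := hdet
    have hD' : z b * w a - z a * w b ≠ 0 := by
      intro h0; apply hdet; linear_combination h0
    ext
    · simp only [LinearMap.prod_apply, Function.prod, LinearMap.proj_apply, Pi.add_apply,
        Pi.smul_apply, smul_eq_mul]
      field_simp
      ring
    · simp only [LinearMap.prod_apply, Function.prod, LinearMap.proj_apply, Pi.add_apply,
        Pi.smul_apply, smul_eq_mul]
      field_simp
      ring
  have hfin := finrank_inf_ker (C ⊓ dualCode C) L hsurj
  rw [hh] at hfin
  have hF2 : finrank F (F × F) = 2 := by
    rw [Module.finrank_prod, Module.finrank_self]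
  omega

lemma exists_fresh {m : ℕ} (s : Finset (Fin m)) (h : s.card < m) : ∃ a, a ∉ s := by
  by_contra hcon
  push_neg at hcon
  have huniv : (Finset.univ : Finset (Fin m)) ⊆ s := fun c _ => hcon c
  have := Finset.card_le_card huniv
  simp [Finset.card_univ] at this
  omega

/-- Construction of a rank-one hull drop in characteristic 2. -/
lemma exists_drop_one_char2 (char2 : (2 : Fq) = 0)
    (C : Submodule F (Fin n → F)) {h : ℕ}
    (hh : finrank F ↥(C ⊓ dualCode C) = h) (h3 : 3 ≤ h) :
    ∃ A : Matrix (Fin n) (Fin n) Fq, IsUnit A ∧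
      finrank F ↥(C.map (rightMulCode A) ⊓ dualCode (C.map (rightMulCode A))) = h - 1 := by
  classical
  have char2F : (2 : F) = 0 := by
    have := map_ofNat (algebraMap Fq F) 2
    rw [← this, char2, map_zero]
  have hn : 3 ≤ n := by
    have h1 : finrank F ↥(C ⊓ dualCode C) ≤ finrank F (Fin n → F) := Submodule.finrank_le _
    rw [hh] at h1
    have h2 : finrank F (Fin n → F) = n := by simp
    omega
  obtain ⟨a, b, hab, x, hx, hsum⟩ :
      ∃ a b, a ≠ b ∧ ∃ x ∈ C ⊓ dualCode C, x a + x b ≠ 0 := by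
    by_contra hcon
    push_neg at hcon
    have hconst : ∀ x ∈ C ⊓ dualCode C, ∀ i j : Fin n, x i = x j := by
      intro x hx i j
      rcases eq_or_ne i j with rfl | hij
      · rfl
      · have hzero := hcon i j hij x hx
        linear_combination hzero - x j * char2F
    have i0 : Fin n := ⟨0, by omega⟩
    have hle : C ⊓ dualCode C ≤ Submodule.span F {(fun _ => 1 : Fin n → F)} := by
      intro x hx
      have hxeq : x = x i0 • (fun _ => 1 : Fin n → F) := by
        funext j
        simp [hconst x hx j i0]
      rw [hxeq]
      exact Submodule.smul_mem _ _ (Submodule.mem_span_singleton_self _)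
    have hone : (fun _ => (1:F) : Fin n → F) ≠ 0 := by
      intro e
      have := congrFun e i0
      simp at this
    have hmono := Submodule.finrank_mono hle
    rw [hh, finrank_span_singleton hone] at hmono
    omega
  obtain ⟨c, hc⟩ : ∃ c, c ∉ ({a, b} : Finset (Fin n)) := by
    apply exists_fresh
    have := Finset.card_insert_le a ({b} : Finset (Fin n))
    simp only [Finset.card_singleton] at this
    omega
  simp only [Finset.mem_insert, Finset.mem_singleton, not_or] at hc
  obtain ⟨hca, hcb⟩ := hc
  have hba : b ≠ a := hab.symm
  have hac : a ≠ c := Ne.symm hca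
  have hbc : b ≠ c := Ne.symm hcb
  -- basic vectors over Fq
  set ea : Fin n → Fq := Pi.single a 1 with hea
  set eb : Fin n → Fq := Pi.single b 1 with heb
  set ec : Fin n → Fq := Pi.single c 1 with hec
  set w : Fin n → Fq := ea + eb with hw
  set u : Fin n → Fq := w + ec with hu
  set M₁ : Matrix (Fin n) (Fin n) Fq := vecMulVec u u with hM₁
  set M₂ : Matrix (Fin n) (Fin n) Fq := vecMulVec ec ec with hM₂
  set A : Matrix (Fin n) (Fin n) Fq := 1 + M₁ + M₂ with hA
  clear_value ea eb ec w u M₁ M₂ A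
  have dww : w ⬝ᵥ w = 2 := by
    rw [hw, hea, heb, add_dotProduct, dotProduct_add, dotProduct_add, sds, sds,
      sdsn hab, sdsn hba]
    norm_num
  have dwc : w ⬝ᵥ ec = 0 := by
    rw [hw, hea, heb, hec, add_dotProduct, sdsn hac, sdsn hbc, add_zero]
  have dcw : ec ⬝ᵥ w = 0 := by
    rw [hw, hea, heb, hec, dotProduct_add, sdsn hca, sdsn hcb, add_zero]
  have dcc : ec ⬝ᵥ ec = 1 := by rw [hec, sds]
  have duu : u ⬝ᵥ u = 3 := by
    rw [hu, add_dotProduct, dotProduct_add, dotProduct_add, dww, dwc, dcw, dcc]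
    norm_num
  have duc : u ⬝ᵥ ec = 1 := by rw [hu, add_dotProduct, dwc, dcc, zero_add]
  have dcu : ec ⬝ᵥ u = 1 := by rw [hu, dotProduct_add, dcw, dcc, zero_add]
  have h31 : (3 : Fq) = 1 := by linear_combination char2
  have p11 : M₁ * M₁ = M₁ := by rw [hM₁, vmv_mul_vmv, duu, h31, one_smul]
  have p12 : M₁ * M₂ = vecMulVec u ec := by rw [hM₁, hM₂, vmv_mul_vmv, duc, one_smul]
  have p21 : M₂ * M₁ = vecMulVec ec u := by rw [hM₁, hM₂, vmv_mul_vmv, dcu, one_smul]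
  have p22 : M₂ * M₂ = M₂ := by rw [hM₂, vmv_mul_vmv, dcc, one_smul]
  have hec2 : ec + ec = 0 := by
    have : (2:Fq) • ec = 0 := by rw [char2, zero_smul]
    rwa [two_smul] at this
  have huec : u + ec = w := by
    rw [hu, add_assoc, hec2, add_zero]
  have hwexp : vecMulVec w w = M₁ + vecMulVec u ec + vecMulVec ec u + M₂ := by
    rw [hM₁, hM₂, ← huec, vmv_add_left, vmv_add_right, vmv_add_right]
    abel
  have e1 : (2:ℤ) • M₁ = 0 := by
    rw [← Int.cast_smul_eq_zsmul Fq, Int.cast_ofNat, char2, zero_smul]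
  have e2 : (2:ℤ) • M₂ = 0 := by
    rw [← Int.cast_smul_eq_zsmul Fq, Int.cast_ofNat, char2, zero_smul]
  have hAA : A * A = 1 + vecMulVec w w := by
    have expand : (1 + M₁ + M₂) * (1 + M₁ + M₂)
        = 1 + M₁ + M₂ + M₁ + M₁*M₁ + M₁*M₂ + M₂ + M₂*M₁ + M₂*M₂ := by noncomm_ring
    rw [hA, expand, p11, p12, p21, p22, hwexp, ← sub_eq_zero]
    abel_nf
    rw [e1, e2, add_zero]
  have hAt : Aᵀ = A := by
    rw [hA, transpose_add, transpose_add, transpose_one, hM₁, hM₂, vmv_transpose,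
      vmv_transpose]
  have hSS : (1 + vecMulVec w w) * (1 + vecMulVec w w) = 1 := by
    have hww0 : vecMulVec w w * vecMulVec w w = 0 := by
      rw [vmv_mul_vmv, dww, char2, zero_smul]
    have hww2 : vecMulVec w w + vecMulVec w w = 0 := by
      have : (2:Fq) • vecMulVec w w = 0 := by rw [char2, zero_smul]
      rwa [two_smul] at this
    rw [mul_add, mul_one, add_mul, one_mul, hww0, add_zero, add_assoc, hww2, add_zero]
  have hmul : A * (A * (1 + vecMulVec w w)) = 1 := by
    rw [← mul_assoc, hAA, hSS]
  have hUnit : IsUnit A := ⟨⟨A, _, hmul, mul_eq_one_comm.mp hmul⟩, rfl⟩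
  -- over F
  set u' : Fin n → F := Pi.single a 1 + Pi.single b 1 with hu'
  have halg_w : (algebraMap Fq F) ∘ w = u' := by
    funext i
    simp [hw, hu', hea, heb, Pi.single_apply, apply_ite (algebraMap Fq F)]
  have hSF : (A * Aᵀ).map (algebraMap Fq F) = 1 + vecMulVec u' u' := by
    rw [hAt, hAA, Matrix.map_add _ (map_add _), Matrix.map_one _ (map_zero _) (map_one _),
      map_vmv, halg_w]
  have hu'x : u' ⬝ᵥ x ≠ 0 := by
    simpa [hu', add_dotProduct, single_dotProduct] using hsum
  exact ⟨A, hUnit, drop_one_of C hh A hUnit u' hSF x hx hu'x⟩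

/-- Construction of a rank-one hull drop in characteristic 3. -/
lemma exists_drop_one_char3 (char3 : (3 : Fq) = 0)
    (C : Submodule F (Fin n → F)) {h : ℕ}
    (hh : finrank F ↥(C ⊓ dualCode C) = h) (h3 : 3 ≤ h) :
    ∃ A : Matrix (Fin n) (Fin n) Fq, IsUnit A ∧
      finrank F ↥(C.map (rightMulCode A) ⊓ dualCode (C.map (rightMulCode A))) = h - 1 := by
  classical
  have hn : 3 ≤ n := by
    have h1 : finrank F ↥(C ⊓ dualCode C) ≤ finrank F (Fin n → F) := Submodule.finrank_le _
    rw [hh] at h1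
    have h2 : finrank F (Fin n → F) = n := by simp
    omega
  obtain ⟨a, b, c, hab, hac, hbc, x, hx, hsum⟩ :
      ∃ a b c : Fin n, a ≠ b ∧ a ≠ c ∧ b ≠ c ∧
        ∃ x ∈ C ⊓ dualCode C, x a + x b + x c ≠ 0 := by
    by_contra hcon
    push_neg at hcon
    rcases Nat.lt_or_ge n 4 with hn4 | hn4
    · have hn3 : n = 3 := by omega
      subst hn3
      have hle : C ⊓ dualCode C ≤ LinearMap.ker (dotL (fun _ => (1:F))) := by
        intro y hy
        simp only [LinearMap.mem_ker, dotL_apply]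
        have h0 : y ⬝ᵥ (fun _ => (1:F)) = y 0 + y 1 + y 2 := by
          simp [dotProduct, Fin.sum_univ_three]
        rw [h0]
        exact hcon 0 1 2 (by decide) (by decide) (by decide) y hy
      have hrnk := LinearMap.finrank_range_add_finrank_ker
        (dotL (fun _ => (1:F)) : (Fin 3 → F) →ₗ[F] F)
      have hne : LinearMap.range (dotL (fun _ => (1:F)) : (Fin 3 → F) →ₗ[F] F) ≠ ⊥ := by
        rw [Submodule.ne_bot_iff]
        refine ⟨1, ⟨Pi.single 0 1, ?_⟩, one_ne_zero⟩
        simp [dotL_apply, single_dotProduct]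
      have hrge : finrank F ↥(LinearMap.range
          (dotL (fun _ => (1:F)) : (Fin 3 → F) →ₗ[F] F)) ≠ 0 := by
        rwa [ne_eq, Submodule.finrank_eq_zero]
      have htot : finrank F (Fin 3 → F) = 3 := by simp
      have hmono := Submodule.finrank_mono hle
      rw [hh] at hmono
      omega
    · have hconst : ∀ y ∈ C ⊓ dualCode C, ∀ i j : Fin n, y i = y j := by
        intro y hy i j
        rcases eq_or_ne i j with rfl | hij
        · rfl
        obtain ⟨k, hk⟩ : ∃ k, k ∉ ({i, j} : Finset (Fin n)) := by
          apply exists_fresh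
          have := Finset.card_insert_le i ({j} : Finset (Fin n))
          simp only [Finset.card_singleton] at this
          omega
        obtain ⟨l, hl⟩ : ∃ l, l ∉ ({i, j, k} : Finset (Fin n)) := by
          apply exists_fresh
          have h1 := Finset.card_insert_le i ({j, k} : Finset (Fin n))
          have h2 := Finset.card_insert_le j ({k} : Finset (Fin n))
          simp only [Finset.card_singleton] at h1 h2
          omega
        simp only [Finset.mem_insert, Finset.mem_singleton, not_or] at hk hl
        obtain ⟨hki, hkj⟩ := hk
        obtain ⟨hli, hlj, hlk⟩ := hl
        have e1 := hcon i k l (Ne.symm hki) (Ne.symm hli) (Ne.symm hlk) y hy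
        have e2 := hcon j k l (Ne.symm hkj) (Ne.symm hlj) (Ne.symm hlk) y hy
        linear_combination e1 - e2
      have i0 : Fin n := ⟨0, by omega⟩
      have hle : C ⊓ dualCode C ≤ Submodule.span F {(fun _ => 1 : Fin n → F)} := by
        intro y hy
        have hyeq : y = y i0 • (fun _ => 1 : Fin n → F) := by
          funext j
          simp [hconst y hy j i0]
        rw [hyeq]
        exact Submodule.smul_mem _ _ (Submodule.mem_span_singleton_self _)
      have hone : (fun _ => (1:F) : Fin n → F) ≠ 0 := by
        intro e
        have := congrFun e i0
        simp at this
      have hmono := Submodule.finrank_mono hle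
      rw [hh, finrank_span_singleton hone] at hmono
      omega
  have hba : b ≠ a := hab.symm
  have hca : c ≠ a := hac.symm
  have hcb : c ≠ b := hbc.symm
  set N : Matrix (Fin n) (Fin n) Fq :=
    vecMulVec (Pi.single a 1) (Pi.single b 1) + vecMulVec (Pi.single b 1) (Pi.single c 1)
      + vecMulVec (Pi.single c 1) (Pi.single a 1) with hN
  set N2 : Matrix (Fin n) (Fin n) Fq :=
    vecMulVec (Pi.single a 1) (Pi.single c 1) + vecMulVec (Pi.single b 1) (Pi.single a 1)
      + vecMulVec (Pi.single c 1) (Pi.single b 1) with hN2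
  set D : Matrix (Fin n) (Fin n) Fq :=
    vecMulVec (Pi.single a 1) (Pi.single a 1) + vecMulVec (Pi.single b 1) (Pi.single b 1)
      + vecMulVec (Pi.single c 1) (Pi.single c 1) with hD
  clear_value N N2 D
  have pNN : N * N = N2 := by
    rw [hN, hN2]
    simp only [add_mul, mul_add, vmv_mul_vmv, sds, sdsn hab, sdsn hba, sdsn hac, sdsn hca,
      sdsn hbc, sdsn hcb, one_smul, zero_smul, add_zero, zero_add]
    try abel
  have pNN2 : N * N2 = D := by
    rw [hN, hN2, hD]
    simp only [add_mul, mul_add, vmv_mul_vmv, sds, sdsn hab, sdsn hba, sdsn hac, sdsn hca,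
      sdsn hbc, sdsn hcb, one_smul, zero_smul, add_zero, zero_add]
    try abel
  have pN2N : N2 * N = D := by
    rw [hN, hN2, hD]
    simp only [add_mul, mul_add, vmv_mul_vmv, sds, sdsn hab, sdsn hba, sdsn hac, sdsn hca,
      sdsn hbc, sdsn hcb, one_smul, zero_smul, add_zero, zero_add]
    try abel
  have pND : N * D = N := by
    rw [hN, hD]
    simp only [add_mul, mul_add, vmv_mul_vmv, sds, sdsn hab, sdsn hba, sdsn hac, sdsn hca,
      sdsn hbc, sdsn hcb, one_smul, zero_smul, add_zero, zero_add]
    try abel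
  have pDN : D * N = N := by
    rw [hN, hD]
    simp only [add_mul, mul_add, vmv_mul_vmv, sds, sdsn hab, sdsn hba, sdsn hac, sdsn hca,
      sdsn hbc, sdsn hcb, one_smul, zero_smul, add_zero, zero_add]
    try abel
  set A : Matrix (Fin n) (Fin n) Fq := 1 + N with hA
  set B : Matrix (Fin n) (Fin n) Fq := 1 + N - N2 + D with hB
  clear_value A B
  have e3 : (3:ℤ) • N = 0 := by
    rw [← Int.cast_smul_eq_zsmul Fq, Int.cast_ofNat, char3, zero_smul]
  have hAB : A * B = 1 := by
    have expand : (1 + N) * (1 + N - N2 + D)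
        = 1 + N - N2 + D + N + N*N - N*N2 + N*D := by noncomm_ring
    rw [hA, hB, expand, pNN, pNN2, pND, ← sub_eq_zero]
    abel_nf
    exact e3
  have hBA : B * A = 1 := by
    have expand : (1 + N - N2 + D) * (1 + N)
        = 1 + N - N2 + D + N + N*N - N2*N + D*N := by noncomm_ring
    rw [hA, hB, expand, pNN, pN2N, pDN, ← sub_eq_zero]
    abel_nf
    exact e3
  have hUnit : IsUnit A := ⟨⟨A, B, hAB, hBA⟩, rfl⟩
  have pNNt : N * Nᵀ = D := by
    rw [hN, hD, transpose_add, transpose_add, vmv_transpose, vmv_transpose, vmv_transpose]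
    simp only [add_mul, mul_add, vmv_mul_vmv, sds, sdsn hab, sdsn hba, sdsn hac, sdsn hca,
      sdsn hbc, sdsn hcb, one_smul, zero_smul, add_zero, zero_add]
    try abel
  have hNt : Nᵀ = vecMulVec (Pi.single b 1) (Pi.single a 1)
      + vecMulVec (Pi.single c 1) (Pi.single b 1)
      + vecMulVec (Pi.single a 1) (Pi.single c 1) := by
    rw [hN, transpose_add, transpose_add, vmv_transpose, vmv_transpose, vmv_transpose]
  have huu : vecMulVec (Pi.single a 1 + Pi.single b 1 + Pi.single c 1 : Fin n → Fq)
      (Pi.single a 1 + Pi.single b 1 + Pi.single c 1) = N + Nᵀ + D := by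
    rw [hNt, hN, hD, vmv_add_left, vmv_add_left, vmv_add_right, vmv_add_right,
      vmv_add_right, vmv_add_right, vmv_add_right, vmv_add_right]
    abel
  have hS : A * Aᵀ = 1 + vecMulVec (Pi.single a 1 + Pi.single b 1 + Pi.single c 1)
      (Pi.single a 1 + Pi.single b 1 + Pi.single c 1) := by
    have expand : (1 + N) * (1 + Nᵀ) = 1 + Nᵀ + N + N * Nᵀ := by noncomm_ring
    rw [hA, transpose_add, transpose_one, expand, pNNt, huu]
    abel
  set u' : Fin n → F := Pi.single a 1 + Pi.single b 1 + Pi.single c 1 with hu'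
  have halg : (algebraMap Fq F) ∘
      ((Pi.single a 1 + Pi.single b 1 + Pi.single c 1 : Fin n → Fq)) = u' := by
    funext i
    simp [hu', Pi.single_apply, apply_ite (algebraMap Fq F)]
  have hSF : (A * Aᵀ).map (algebraMap Fq F) = 1 + vecMulVec u' u' := by
    rw [hS, Matrix.map_add _ (map_add _), Matrix.map_one _ (map_zero _) (map_one _),
      map_vmv, halg]
  have hu'x : u' ⬝ᵥ x ≠ 0 := by
    simpa [hu', add_dotProduct, single_dotProduct] using hsum
  exact ⟨A, hUnit, drop_one_of C hh A hUnit u' hSF x hx hu'x⟩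

lemma exists_pair_det (C : Submodule F (Fin n → F)) {h : ℕ}
    (hh : finrank F ↥(C ⊓ dualCode C) = h) (h2 : 2 ≤ h) :
    ∃ (a b : Fin n) (w z : Fin n → F), a ≠ b ∧ w ∈ C ⊓ dualCode C ∧ z ∈ C ⊓ dualCode C ∧
      w a * z b - w b * z a ≠ 0 := by
  have hbot : C ⊓ dualCode C ≠ ⊥ := by
    intro e
    rw [e] at hh
    simp [finrank_bot] at hh
    omega
  obtain ⟨w, hw, hw0⟩ := (Submodule.ne_bot_iff _).mp hbot
  obtain ⟨a, ha⟩ : ∃ a, w a ≠ 0 := by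
    by_contra hcon
    push_neg at hcon
    exact hw0 (funext hcon)
  by_contra hcon
  push_neg at hcon
  have hle : C ⊓ dualCode C ≤ Submodule.span F {w} := by
    intro z hz
    have hzeq : z = (z a / w a) • w := by
      funext j
      rcases eq_or_ne a j with rfl | haj
      · simp [div_mul_cancel₀, ha]
      · have hzj : w a * z j - w j * z a = 0 := hcon a j w z haj hw hz
        simp only [Pi.smul_apply, smul_eq_mul]
        rw [div_mul_eq_mul_div, eq_div_iff ha]
        linear_combination hzj
    rw [hzeq]
    exact Submodule.smul_mem _ _ (Submodule.mem_span_singleton_self _)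
  have hmono := Submodule.finrank_mono hle
  rw [hh, finrank_span_singleton hw0] at hmono
  omega

lemma main_aux (hchar : (2 : Fq) = 0 ∨ (3 : Fq) = 0) :
    ∀ h : ℕ, ∀ C : Submodule F (Fin n → F), finrank F ↥(C ⊓ dualCode C) = h → 2 ≤ h →
      ∀ ℓ : ℕ, ℓ ≤ h - 2 →
      ∃ A : Matrix (Fin n) (Fin n) Fq, IsUnit A ∧
        finrank F ↥(C.map (rightMulCode A) ⊓ dualCode (C.map (rightMulCode A))) = ℓ := by
  intro h
  induction h using Nat.strong_induction_on with
  | _ h IH =>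
    intro C hh h2 ℓ hℓ
    rcases eq_or_lt_of_le hℓ with heq | hlt
    · obtain ⟨a, b, w, z, hab, hw, hz, hdet⟩ := exists_pair_det C hh h2
      obtain ⟨A, hA, hfin⟩ := drop_two (Fq := Fq) C hh a b hab w z hw hz hdet
      exact ⟨A, hA, by omega⟩
    · have h3 : 3 ≤ h := by omega
      obtain ⟨A₁, hA₁, hfin₁⟩ :
          ∃ A : Matrix (Fin n) (Fin n) Fq, IsUnit A ∧
            finrank F ↥(C.map (rightMulCode A) ⊓ dualCode (C.map (rightMulCode A)))
              = h - 1 := by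
        rcases hchar with h2' | h3'
        · exact exists_drop_one_char2 h2' C hh h3
        · exact exists_drop_one_char3 h3' C hh h3
      obtain ⟨A₂, hA₂, hfin₂⟩ := IH (h - 1) (by omega) (C.map (rightMulCode A₁)) hfin₁
        (by omega) ℓ (by omega)
      refine ⟨A₁ * A₂, hA₁.mul hA₂, ?_⟩
      have hcomp : C.map (rightMulCode (A₁ * A₂) : (Fin n → F) →ₗ[F] (Fin n → F))
          = (C.map (rightMulCode A₁)).map (rightMulCode A₂) := by
        rw [← Submodule.map_comp]
        congr 1
        apply LinearMap.ext
        intro v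
        simp [rightMulCode, vecMulLinear_apply, Matrix.map_mul, vecMul_vecMul]
      rw [hcomp]
      exact hfin₂

end Main

end HullReductionAux

/-- Theorem 3.4(2): hull reduction for `q ∈ {2,3}` and hull dimension `h ≥ 2`. -/
theorem hull_reduction_q_two_three {Fq F : Type*} [Field Fq] [Field F]
    [Fintype Fq] [Fintype F] [Algebra Fq F]
    (hq : Fintype.card Fq = 2 ∨ Fintype.card Fq = 3)
    {n k h : ℕ} (C : Submodule F (Fin n → F)) (hk : Module.finrank F C = k)
    (hh : Module.finrank F ↥(C ⊓ dualCode C) = h) (h2 : 2 ≤ h)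
    (ℓ : ℕ) (hℓ : ℓ ≤ h - 2) :
    ∃ A : Matrix (Fin n) (Fin n) Fq, IsUnit A ∧
      Module.finrank F ↥(C.map (rightMulCode A) ⊓ dualCode (C.map (rightMulCode A))) = ℓ := by
  have hchar : (2 : Fq) = 0 ∨ (3 : Fq) = 0 := by
    have hcast := FiniteField.cast_card_eq_zero Fq
    rcases hq with hcard | hcard
    · left
      rw [hcard] at hcast
      exact_mod_cast hcast
    · right
      rw [hcard] at hcast
      exact_mod_cast hcast
  exact HullReductionAux.main_aux hchar h C hh h2 ℓ hℓ
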